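/- Let g : [−1, 1] → ℝ be C². Then there exists C > 0 such that for all r ∈ (0, 1]: | ∫_{−r}^{r} x²·g(x)·(r² − x²)^{−1/2} dx − (π/2)·g(0)·r² | ≤ C·r⁴. -/

import Mathlib

open MeasureTheory

open Real Set intervalIntegral

lemma contG {g : ℝ → ℝ} (hgc : ContinuousOn g (Set.Icc (-1 : ℝ) 1)) {r : ℝ}
    (hr : 0 < r) (hr1 : r ≤ 1) :
    ContinuousOn (fun x => x ^ 2 * g x / Real.sqrt (r ^ 2 - x ^ 2)) (Set.Ioo (-r) r) := by
  have hsub : Set.Ioo (-r) r ⊆ Set.Icc (-1 : ℝ) 1 := fun y hy =>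
    ⟨by linarith [hy.1], by linarith [hy.2]⟩
  apply ContinuousOn.div
  · exact ((continuous_pow 2).continuousOn).mul (hgc.mono hsub)
  · exact (Real.continuous_sqrt.comp (continuous_const.sub (continuous_pow 2))).continuousOn
  · intro x hx
    have hpos : 0 < r ^ 2 - x ^ 2 := by nlinarith [hx.1, hx.2]
    exact ne_of_gt (Real.sqrt_pos.mpr hpos)

lemma integrable_main {g : ℝ → ℝ} (hgc : ContinuousOn g (Set.Icc (-1 : ℝ) 1)) {r : ℝ}
    (hr : 0 < r) (hr1 : r ≤ 1) :
    IntegrableOn (fun x => x ^ 2 * g x / Real.sqrt (r ^ 2 - x ^ 2)) (Set.Icc (-r) r) := by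
  rw [integrableOn_Icc_iff_integrableOn_Ioo]
  obtain ⟨B, hB⟩ := isCompact_Icc.exists_bound_of_continuousOn hgc
  have hB0 : 0 ≤ B := le_trans (norm_nonneg _) (hB 0 (by constructor <;> norm_num))
  set c0 : ℝ := r ^ 2 * B / Real.sqrt r with hc0
  set φ : ℝ → ℝ := fun x => c0 * ((r - x) ^ (-(1/2) : ℝ) + (r + x) ^ (-(1/2) : ℝ)) with hφ
  have hint : IntervalIntegrable φ volume (-r) r := by
    have h1 : IntervalIntegrable (fun x : ℝ => x ^ (-(1/2) : ℝ)) volume 0 (2 * r) :=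
      intervalIntegrable_rpow' (by norm_num)
    have h2 := (h1.comp_sub_left r).symm
    have h3 := h1.comp_add_right r
    have e0 : r - 2 * r = -r := by ring
    have e0' : 2 * r - r = r := by ring
    rw [sub_zero, e0] at h2
    rw [zero_sub, e0'] at h3
    have h2' : IntervalIntegrable (fun x : ℝ => (r - x) ^ (-(1/2) : ℝ)) volume (-r) r := h2
    have h3' : IntervalIntegrable (fun x : ℝ => (r + x) ^ (-(1/2) : ℝ)) volume (-r) r := by
      have e : (fun x : ℝ => (r + x) ^ (-(1/2) : ℝ)) = fun x : ℝ => (x + r) ^ (-(1/2) : ℝ) := by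
        funext y; rw [add_comm]
      rw [e]; exact h3
    exact ((h2'.add h3').const_mul c0)
  have hφint : IntegrableOn φ (Set.Ioo (-r) r) :=
    ((hint.1).mono_set Set.Ioo_subset_Ioc_self)
  refine Integrable.mono' hφint ?_ ?_
  · exact ((contG hgc hr hr1).aestronglyMeasurable measurableSet_Ioo)
  · rw [ae_restrict_iff' measurableSet_Ioo]
    refine Filter.Eventually.of_forall fun x hx => ?_
    have hxr : |x| < r := abs_lt.mpr ⟨hx.1, hx.2⟩
    have hpos : 0 < r ^ 2 - x ^ 2 := by nlinarith [hx.1, hx.2]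
    have hgx : |g x| ≤ B := hB x ⟨by linarith [hx.1], by linarith [hx.2]⟩
    have hrx : 0 < r - |x| := by linarith
    have key : Real.sqrt r * Real.sqrt (r - |x|) ≤ Real.sqrt (r ^ 2 - x ^ 2) := by
      rw [← Real.sqrt_mul hr.le]
      apply Real.sqrt_le_sqrt
      nlinarith [abs_nonneg x, sq_abs x]
    have hden : 0 < Real.sqrt r * Real.sqrt (r - |x|) :=
      mul_pos (Real.sqrt_pos.mpr hr) (Real.sqrt_pos.mpr hrx)
    have step1 : ‖x ^ 2 * g x / Real.sqrt (r ^ 2 - x ^ 2)‖ ≤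
        r ^ 2 * B / (Real.sqrt r * Real.sqrt (r - |x|)) := by
      rw [Real.norm_eq_abs, abs_div, abs_mul]
      apply div_le_div₀ (by positivity)
      · apply mul_le_mul _ hgx (abs_nonneg _) (by positivity)
        rw [abs_pow, sq_abs] at *
        nlinarith [sq_abs x, abs_nonneg x]
      · exact hden
      · rwa [abs_of_nonneg (Real.sqrt_nonneg _)]
    refine step1.trans ?_
    have e1 : r ^ 2 * B / (Real.sqrt r * Real.sqrt (r - |x|)) =
        c0 * (r - |x|) ^ (-(1/2) : ℝ) := by
      rw [hc0, Real.rpow_neg hrx.le, ← Real.sqrt_eq_rpow]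
      field_simp
    rw [e1]
    have hmax : (r - |x|) ^ (-(1/2) : ℝ) ≤
        (r - x) ^ (-(1/2) : ℝ) + (r + x) ^ (-(1/2) : ℝ) := by
      rcases le_or_gt 0 x with h | h
      · rw [abs_of_nonneg h]
        have : (0:ℝ) ≤ (r + x) ^ (-(1/2) : ℝ) := Real.rpow_nonneg (by linarith) _
        linarith
      · rw [abs_of_neg h]
        have : (0:ℝ) ≤ (r - x) ^ (-(1/2) : ℝ) := Real.rpow_nonneg (by linarith) _
        have e : r - -x = r + x := by ring
        linarith [le_of_eq (congrArg (fun y => y ^ (-(1/2):ℝ)) e)]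
    calc c0 * (r - |x|) ^ (-(1/2) : ℝ) ≤ c0 * ((r - x) ^ (-(1/2) : ℝ) + (r + x) ^ (-(1/2) : ℝ)) :=
          mul_le_mul_of_nonneg_left hmax (by positivity)
      _ = φ x := rfl

lemma subst_lemma {g : ℝ → ℝ} (hgc : ContinuousOn g (Set.Icc (-1 : ℝ) 1)) {r : ℝ}
    (hr : 0 < r) (hr1 : r ≤ 1) :
    (∫ x in Set.Ioo (-r) r, x ^ 2 * g x / Real.sqrt (r ^ 2 - x ^ 2)) =
      ∫ θ in (-(π / 2))..(π / 2), r ^ 2 * Real.sin θ ^ 2 * g (r * Real.sin θ) := by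
  have hpi : -(π / 2) ≤ π / 2 := by linarith [Real.pi_pos]
  have hmin : min (-(π / 2)) (π / 2) = -(π / 2) := min_eq_left hpi
  have hmax : max (-(π / 2)) (π / 2) = π / 2 := max_eq_right hpi
  set G : ℝ → ℝ := fun x => x ^ 2 * g x / Real.sqrt (r ^ 2 - x ^ 2) with hG
  have himage_oo : ∀ θ ∈ Set.Ioo (-(π / 2)) (π / 2), r * Real.sin θ ∈ Set.Ioo (-r) r := by
    intro θ hθ
    have h1 : Real.sin θ < 1 := by
      have := Real.sin_lt_sin_of_lt_of_le_pi_div_two (le_of_lt hθ.1) le_rfl hθ.2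
      simpa using this
    have h2 : -1 < Real.sin θ := by
      have := Real.sin_lt_sin_of_lt_of_le_pi_div_two (le_refl (-(π/2))) (le_of_lt hθ.2) hθ.1
      simpa using this
    constructor <;> nlinarith
  have himage_cc : ∀ θ : ℝ, r * Real.sin θ ∈ Set.Icc (-r) r := by
    intro θ
    constructor <;> nlinarith [Real.neg_one_le_sin θ, Real.sin_le_one θ]
  have heq : ∀ᵐ θ : ℝ, θ ∈ Set.Icc (-(π / 2)) (π / 2) →
      r ^ 2 * Real.sin θ ^ 2 * g (r * Real.sin θ) =
        (r * Real.cos θ) • ((G ∘ fun t => r * Real.sin t) θ) := by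
    have hne : ∀ᵐ θ : ℝ, θ ≠ π / 2 ∧ θ ≠ -(π / 2) := by
      have h1 : ∀ᵐ θ : ℝ, θ ≠ π / 2 := by
        rw [MeasureTheory.ae_iff]
        convert Real.volume_singleton (a := π / 2) using 2
        ext θ; simp
      have h2 : ∀ᵐ θ : ℝ, θ ≠ -(π / 2) := by
        rw [MeasureTheory.ae_iff]
        convert Real.volume_singleton (a := -(π / 2)) using 2
        ext θ; simp
      exact h1.and h2
    filter_upwards [hne] with θ hθ hmem
    obtain ⟨hθ1, hθ2⟩ := hθ
    have hθoo : θ ∈ Set.Ioo (-(π / 2)) (π / 2) :=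
      ⟨lt_of_le_of_ne hmem.1 (Ne.symm hθ2), lt_of_le_of_ne hmem.2 hθ1⟩
    have hcosθ : 0 < Real.cos θ := Real.cos_pos_of_mem_Ioo hθoo
    have hsq : r ^ 2 - (r * Real.sin θ) ^ 2 = (r * Real.cos θ) ^ 2 := by
      have := Real.sin_sq_add_cos_sq θ
      nlinarith
    simp only [Function.comp, hG, smul_eq_mul, hsq,
      Real.sqrt_sq (by positivity : (0:ℝ) ≤ r * Real.cos θ)]
    rw [mul_comm (r * Real.cos θ), div_mul_cancel₀ _ (by positivity : r * Real.cos θ ≠ 0)]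
    ring
  have key := intervalIntegral.integral_comp_smul_deriv'''
    (a := -(π / 2)) (b := π / 2)
    (f := fun θ => r * Real.sin θ) (f' := fun θ => r * Real.cos θ) (g := G)
    ((continuous_const.mul Real.continuous_sin).continuousOn)
    (by
      intro x hx
      exact ((Real.hasDerivAt_sin x).const_mul r).hasDerivWithinAt)
    (by
      rw [hmin, hmax]
      refine (contG hgc hr hr1).mono ?_
      rintro _ ⟨θ, hθ, rfl⟩
      exact himage_oo θ hθ)
    (by
      refine (integrable_main hgc hr hr1).mono_set ?_
      rintro _ ⟨θ, hθ, rfl⟩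
      exact himage_cc θ)
    (by
      rw [Set.uIcc_of_le hpi]
      have hcont : ContinuousOn (fun θ => r ^ 2 * Real.sin θ ^ 2 * g (r * Real.sin θ))
          (Set.Icc (-(π / 2)) (π / 2)) := by
        refine ContinuousOn.mul (by fun_prop) ?_
        refine hgc.comp (by fun_prop) ?_
        intro θ _
        have h := himage_cc θ
        simp only [Set.mem_Icc] at h ⊢
        exact ⟨by linarith [h.1], by linarith [h.2]⟩
      exact (hcont.integrableOn_Icc).congr ((ae_restrict_iff' measurableSet_Icc).mpr heq))
  simp only [Real.sin_pi_div_two, Real.sin_neg, mul_one, mul_neg] at key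
  have e2 : (∫ x in Set.Ioo (-r) r, G x) = ∫ x in (-r)..r, G x := by
    rw [intervalIntegral.integral_of_le (by linarith),
      MeasureTheory.integral_Ioc_eq_integral_Ioo]
  rw [e2, ← key]
  refine (intervalIntegral.integral_congr_ae ?_).symm
  filter_upwards [heq] with θ h hmem
  rw [Set.uIoc_of_le hpi] at hmem
  exact h (Set.Ioc_subset_Icc_self hmem)

lemma taylor_bound {g : ℝ → ℝ} (hg : ContDiffOn ℝ 2 g (Set.Icc (-1 : ℝ) 1)) :
    ∃ K M : ℝ, 0 ≤ M ∧ ∀ x ∈ Set.Icc (-1 : ℝ) 1, |g x - g 0 - K * x| ≤ M * x ^ 2 := by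
  set s : Set ℝ := Set.Icc (-1 : ℝ) 1 with hs_def
  have hs : UniqueDiffOn ℝ s := uniqueDiffOn_Icc (by norm_num)
  have h0s : (0 : ℝ) ∈ s := by constructor <;> norm_num
  set g1 : ℝ → ℝ := derivWithin g s with hg1_def
  have hg1 : ContDiffOn ℝ 1 g1 s := hg.derivWithin (m := 1) hs (by norm_num)
  set g2 : ℝ → ℝ := derivWithin g1 s with hg2_def
  have hg2c : ContinuousOn g2 s := (hg1.derivWithin (m := 0) hs (by norm_num)).continuousOn
  obtain ⟨M, hM⟩ := isCompact_Icc.exists_bound_of_continuousOn hg2c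
  have hM0 : 0 ≤ M := le_trans (norm_nonneg _) (hM 0 h0s)
  have hderiv1 : ∀ x ∈ s, HasDerivWithinAt g1 (g2 x) s x :=
    fun x hx => ((hg1.differentiableOn one_ne_zero) x hx).hasDerivWithinAt
  have hlip : ∀ x ∈ s, ∀ y ∈ s, |g1 y - g1 x| ≤ M * |y - x| := by
    intro x hx y hy
    simpa [Real.norm_eq_abs] using
      (convex_Icc (-1 : ℝ) 1).norm_image_sub_le_of_norm_hasDerivWithin_le hderiv1 hM hx hy
  refine ⟨g1 0, M, hM0, ?_⟩
  intro x hx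
  obtain ⟨hx1, hx2⟩ := hx
  set t : Set ℝ := Set.uIcc 0 x with ht_def
  have hts : t ⊆ s := by
    intro y hy
    rw [ht_def, Set.mem_uIcc] at hy
    constructor
    · rcases hy with ⟨h1, _⟩ | ⟨h1, _⟩ <;> linarith
    · rcases hy with ⟨_, h2⟩ | ⟨_, h2⟩ <;> linarith
  have habs : ∀ y ∈ t, |y| ≤ |x| := by
    intro y hy
    rw [ht_def, Set.mem_uIcc] at hy
    rcases hy with ⟨h1, h2⟩ | ⟨h1, h2⟩ <;> rw [abs_le] <;>
      constructor <;> [skip; skip; skip; skip] <;>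
      cases' abs_cases x with h h <;> linarith [le_abs_self x, neg_abs_le x]
  have hderivg : ∀ y ∈ t, HasDerivWithinAt (fun z => g z - g1 0 * z) (g1 y - g1 0) t y := by
    intro y hy
    have h1 : HasDerivWithinAt g (g1 y) s y :=
      ((hg.differentiableOn (by norm_num)) y (hts hy)).hasDerivWithinAt
    have h2 : HasDerivWithinAt (fun z : ℝ => g1 0 * z) (g1 0) t y := by
      simpa using ((hasDerivAt_id y).const_mul (g1 0)).hasDerivWithinAt
    exact (h1.mono hts).sub h2
  have hbound : ∀ y ∈ t, ‖g1 y - g1 0‖ ≤ M * |x| := by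
    intro y hy
    calc ‖g1 y - g1 0‖ = |g1 y - g1 0| := rfl
      _ ≤ M * |y - 0| := hlip 0 h0s y (hts hy)
      _ = M * |y| := by rw [sub_zero]
      _ ≤ M * |x| := mul_le_mul_of_nonneg_left (habs y hy) hM0
  have hkey := (convex_uIcc (0 : ℝ) x).norm_image_sub_le_of_norm_hasDerivWithin_le
    hderivg hbound Set.left_mem_uIcc Set.right_mem_uIcc
  simp only [mul_zero, sub_zero, Real.norm_eq_abs] at hkey
  calc |g x - g 0 - g1 0 * x| = |g x - g1 0 * x - g 0| := by ring_nf
    _ ≤ M * |x| * |x| := hkey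
    _ = M * x ^ 2 := by rw [mul_assoc, abs_mul_abs_self, sq]

/-- The asymptotic expansion behind `J(q₀, a)` in the Example of subsection 7.2 of the
paper: for a C² function `g` on `[−1, 1]`,
`∫_{−r}^{r} x² g(x)(r² − x²)^{−1/2} dx = (π/2) g(0) r² + O(r⁴)` as `r → 0`. -/
theorem statement14 (g : ℝ → ℝ) (hg : ContDiffOn ℝ 2 g (Set.Icc (-1 : ℝ) 1)) :
    ∃ C > 0, ∀ r : ℝ, 0 < r → r ≤ 1 →
      |(∫ x in Set.Ioo (-r) r, x ^ 2 * g x / Real.sqrt (r ^ 2 - x ^ 2)) -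
          (Real.pi / 2) * g 0 * r ^ 2| ≤ C * r ^ 4 := by
  obtain ⟨K, M, hM0, hTay⟩ := taylor_bound hg
  have hπ := Real.pi_pos
  refine ⟨M * π + 1, by nlinarith, ?_⟩
  intro r hr hr1
  rw [subst_lemma hg.continuousOn hr hr1]
  have hpi : -(π / 2) ≤ π / 2 := by linarith
  have hmapsTo : ∀ θ : ℝ, r * Real.sin θ ∈ Set.Icc (-1 : ℝ) 1 := fun θ =>
    ⟨by nlinarith [Real.neg_one_le_sin θ], by nlinarith [Real.sin_le_one θ]⟩
  have hcont_g : ContinuousOn (fun θ : ℝ => g (r * Real.sin θ))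
      (Set.uIcc (-(π / 2)) (π / 2)) :=
    hg.continuousOn.comp (by fun_prop) fun θ _ => hmapsTo θ
  set F : ℝ → ℝ :=
    fun θ => Real.sin θ ^ 2 * (g (r * Real.sin θ) - g 0 - K * (r * Real.sin θ)) with hF_def
  have hF : IntervalIntegrable F volume (-(π / 2)) (π / 2) := by
    apply ContinuousOn.intervalIntegrable
    exact (by fun_prop : ContinuousOn (fun θ : ℝ => Real.sin θ ^ 2) _).mul
      ((hcont_g.sub continuousOn_const).sub (by fun_prop))
  have hsin2 : IntervalIntegrable (fun θ => Real.sin θ ^ 2) volume (-(π / 2)) (π / 2) :=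
    (by fun_prop : Continuous fun θ : ℝ => Real.sin θ ^ 2).intervalIntegrable _ _
  have hsin3 : IntervalIntegrable (fun θ => Real.sin θ ^ 3) volume (-(π / 2)) (π / 2) :=
    (by fun_prop : Continuous fun θ : ℝ => Real.sin θ ^ 3).intervalIntegrable _ _
  have hsplit : (∫ θ in (-(π / 2))..(π / 2), r ^ 2 * Real.sin θ ^ 2 * g (r * Real.sin θ)) =
      r ^ 2 * (∫ θ in (-(π / 2))..(π / 2), F θ)
        + (r ^ 2 * g 0) * (∫ θ in (-(π / 2))..(π / 2), Real.sin θ ^ 2)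
        + (K * r ^ 3) * (∫ θ in (-(π / 2))..(π / 2), Real.sin θ ^ 3) := by
    rw [← intervalIntegral.integral_const_mul, ← intervalIntegral.integral_const_mul,
      ← intervalIntegral.integral_const_mul,
      ← intervalIntegral.integral_add (hF.const_mul _) (hsin2.const_mul _),
      ← intervalIntegral.integral_add ((hF.const_mul _).add (hsin2.const_mul _))
        (hsin3.const_mul _)]
    apply intervalIntegral.integral_congr
    intro θ _
    simp only [hF_def]
    ring
  have hI2 : (∫ θ in (-(π / 2))..(π / 2), Real.sin θ ^ 2) = π / 2 := by
    rw [integral_sin_sq]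
    simp [Real.cos_pi_div_two]
  have hI3 : (∫ θ in (-(π / 2))..(π / 2), Real.sin θ ^ 3) = 0 := by
    rw [integral_sin_pow_three]
    simp [Real.cos_pi_div_two]
  rw [hsplit, hI2, hI3]
  have hbound : |∫ θ in (-(π / 2))..(π / 2), F θ| ≤ M * r ^ 2 * π := by
    have h := intervalIntegral.norm_integral_le_of_norm_le_const (C := M * r ^ 2)
      (f := F) (a := -(π / 2)) (b := π / 2) ?_
    · have : |π / 2 - -(π / 2)| = π := by rw [abs_of_nonneg (by linarith)]; ring
      rwa [Real.norm_eq_abs, this] at h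
    · intro θ _
      have ht := hTay (r * Real.sin θ) (hmapsTo θ)
      have hs1 : Real.sin θ ^ 2 ≤ 1 := Real.sin_sq_le_one θ
      have hs0 : 0 ≤ Real.sin θ ^ 2 := sq_nonneg _
      rw [Real.norm_eq_abs, hF_def, abs_mul, abs_of_nonneg hs0]
      calc Real.sin θ ^ 2 * |g (r * Real.sin θ) - g 0 - K * (r * Real.sin θ)|
          ≤ 1 * (M * (r * Real.sin θ) ^ 2) := by
            apply mul_le_mul hs1 ht (abs_nonneg _) (by norm_num)
        _ ≤ M * r ^ 2 := by nlinarith [mul_nonneg (mul_nonneg hM0 (sq_nonneg r)) (sub_nonneg.mpr hs1), mul_pow r (Real.sin θ) 2]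
  have e : r ^ 2 * (∫ θ in (-(π / 2))..(π / 2), F θ) + r ^ 2 * g 0 * (π / 2)
      + K * r ^ 3 * 0 - π / 2 * g 0 * r ^ 2
      = r ^ 2 * (∫ θ in (-(π / 2))..(π / 2), F θ) := by ring
  rw [e, abs_mul, abs_of_nonneg (sq_nonneg r)]
  calc r ^ 2 * |∫ θ in (-(π / 2))..(π / 2), F θ| ≤ r ^ 2 * (M * r ^ 2 * π) :=
        mul_le_mul_of_nonneg_left hbound (sq_nonneg r)
    _ ≤ (M * π + 1) * r ^ 4 := by nlinarith [sq_nonneg r, pow_pos hr 4]
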